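/- arXiv:2009.13980 — 4 statements merged into one kernel-verified Lean document; each statement's English description precedes it below -/
import Mathlib

section
/- Let k be a field, n a positive integer, and A ∈ GL_n(k). Set B = A·Φ_n⁻¹. Then B·σ(B) = (−1)^{n−1}·A·(A⁻¹)ᵀ. Consequently, B·σ(B) = (−1)^{n−1}·I_n if and only if Aᵀ = A, and B·σ(B) = I_n if and only if Aᵀ = (−1)^{n−1}·A. -/
open Matrix

/-- The matrix `Φ_n` whose `(i,j)` entry (1-indexed) is `(-1)^(i+1)` if `i + j = n + 1`
and `0` otherwise. -/
def Phi (k : Type*) [CommRing k] (n : ℕ) : Matrix (Fin n) (Fin n) k :=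
  Matrix.of fun i j => if (i : ℕ) + (j : ℕ) + 1 = n then (-1 : k) ^ (i : ℕ) else 0

lemma phi_mul_phi (k : Type*) [Field k] (n : ℕ) :
    Phi k n * Phi k n = ((-1 : k) ^ (n - 1)) • (1 : Matrix (Fin n) (Fin n) k) := by
  ext i j
  have hi : (i : ℕ) < n := i.isLt
  have hj : (j : ℕ) < n := j.isLt
  rw [Matrix.mul_apply]
  set r : Fin n := ⟨n - 1 - (i : ℕ), by omega⟩ with hr
  rw [Finset.sum_eq_single r]
  · simp only [Phi, Matrix.of_apply, Matrix.smul_apply, Matrix.one_apply, smul_eq_mul]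
    have hir : (i : ℕ) + (r : ℕ) + 1 = n := by simp [hr]; omega
    rw [if_pos hir]
    by_cases hij : i = j
    · subst hij
      have h2 : (r : ℕ) + (i : ℕ) + 1 = n := by omega
      rw [if_pos h2, if_pos rfl, ← pow_add, mul_one]
      congr 1
      omega
    · have h2 : ¬ ((r : ℕ) + (j : ℕ) + 1 = n) := by
        intro h
        apply hij
        apply Fin.ext
        omega
      rw [if_neg h2, if_neg hij, mul_zero, mul_zero]
  · intro b _ hb
    simp only [Phi, Matrix.of_apply]
    have h2 : ¬ ((i : ℕ) + (b : ℕ) + 1 = n) := by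
      intro h
      apply hb
      apply Fin.ext
      simp [hr]; omega
    rw [if_neg h2, zero_mul]
  · intro h; exact absurd (Finset.mem_univ r) h

lemma phi_transpose (k : Type*) [Field k] (n : ℕ) :
    (Phi k n)ᵀ = ((-1 : k) ^ (n - 1)) • Phi k n := by
  ext i j
  have hi : (i : ℕ) < n := i.isLt
  simp only [Phi, Matrix.transpose_apply, Matrix.of_apply, Matrix.smul_apply, smul_eq_mul]
  by_cases h : (i : ℕ) + (j : ℕ) + 1 = n
  · have h' : (j : ℕ) + (i : ℕ) + 1 = n := by omega
    rw [if_pos h', if_pos h]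
    have h2 : (j : ℕ) + 2 * (i : ℕ) = (n - 1) + (i : ℕ) := by omega
    calc (-1 : k) ^ (j : ℕ) = (-1 : k) ^ ((j : ℕ) + 2 * (i : ℕ)) := by
          rw [pow_add, pow_mul]; norm_num
      _ = (-1 : k) ^ (n - 1) * (-1 : k) ^ (i : ℕ) := by rw [h2, pow_add]
  · have h' : ¬ ((j : ℕ) + (i : ℕ) + 1 = n) := by omega
    rw [if_neg h', if_neg h, mul_zero]

lemma eps_sq (k : Type*) [Field k] (n : ℕ) :
    ((-1 : k) ^ (n - 1)) * ((-1 : k) ^ (n - 1)) = 1 := by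
  rw [← pow_add, ← two_mul, pow_mul]
  norm_num

lemma phi_inv (k : Type*) [Field k] (n : ℕ) :
    (Phi k n)⁻¹ = ((-1 : k) ^ (n - 1)) • Phi k n := by
  apply Matrix.inv_eq_right_inv
  rw [Matrix.mul_smul, phi_mul_phi, smul_smul, eps_sq, one_smul]

/-- for `A ∈ GL_n(k)` and `B = A·Φ_n⁻¹`, with `σ(B) = Φ_n·(Bᵀ)⁻¹·Φ_n⁻¹`,
one has `B·σ(B) = (−1)^{n−1}·A·(A⁻¹)ᵀ`; consequently `B·σ(B) = (−1)^{n−1}·I_n ↔ Aᵀ = A`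
and `B·σ(B) = I_n ↔ Aᵀ = (−1)^{n−1}·A`. -/
theorem stmt_4 (k : Type*) [Field k] (n : ℕ) (hn : 0 < n)
    (A : Matrix (Fin n) (Fin n) k) (hA : IsUnit A)
    (B : Matrix (Fin n) (Fin n) k) (hB : B = A * (Phi k n)⁻¹) :
    B * (Phi k n * (Bᵀ)⁻¹ * (Phi k n)⁻¹) = ((-1 : k) ^ (n - 1)) • (A * (A⁻¹)ᵀ) ∧
    (B * (Phi k n * (Bᵀ)⁻¹ * (Phi k n)⁻¹) =
        ((-1 : k) ^ (n - 1)) • (1 : Matrix (Fin n) (Fin n) k) ↔ Aᵀ = A) ∧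
    (B * (Phi k n * (Bᵀ)⁻¹ * (Phi k n)⁻¹) = 1 ↔ Aᵀ = ((-1 : k) ^ (n - 1)) • A) := by
  set ε := ((-1 : k) ^ (n - 1)) with hε
  have hε2 : ε * ε = 1 := eps_sq k n
  have hdet : IsUnit A.det := (Matrix.isUnit_iff_isUnit_det A).mp hA
  have hdetT : IsUnit Aᵀ.det := by rwa [Matrix.det_transpose]
  have hPhiInvT : ((Phi k n)⁻¹)ᵀ = Phi k n := by
    rw [phi_inv, Matrix.transpose_smul, phi_transpose, smul_smul, hε2, one_smul]
  have hBT : Bᵀ = Phi k n * Aᵀ := by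
    rw [hB, Matrix.transpose_mul, hPhiInvT]
  have hBTinv : (Bᵀ)⁻¹ = (A⁻¹)ᵀ * (ε • Phi k n) := by
    rw [hBT, Matrix.mul_inv_rev, Matrix.transpose_nonsing_inv, phi_inv]
  have key : B * (Phi k n * (Bᵀ)⁻¹ * (Phi k n)⁻¹) = ε • (A * (A⁻¹)ᵀ) := by
    rw [hBTinv, hB, phi_inv]
    have assoc : A * (ε • Phi k n) * (Phi k n * ((A⁻¹)ᵀ * (ε • Phi k n)) * (ε • Phi k n))
        = (ε * ε * ε) • (A * (Phi k n * Phi k n) * ((A⁻¹)ᵀ * (Phi k n * Phi k n))) := by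
      simp only [Matrix.mul_smul, Matrix.smul_mul, smul_smul, Matrix.mul_assoc]
    rw [assoc, mul_assoc, hε2, mul_one, phi_mul_phi, ← hε]
    simp only [Matrix.mul_smul, Matrix.smul_mul, smul_smul, mul_one, Matrix.mul_one, hε2,
      one_smul]
  refine ⟨key, ?_, ?_⟩
  · rw [key]
    constructor
    · intro h
      have h1 : A * (A⁻¹)ᵀ = 1 := by
        have := congrArg (fun M => ε • M) h
        simpa [smul_smul, hε2] using this
      have h2 : A * ((A⁻¹)ᵀ * Aᵀ) = 1 * Aᵀ := by rw [← Matrix.mul_assoc, h1]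
      rw [← Matrix.transpose_mul, Matrix.mul_nonsing_inv A hdet] at h2
      simpa using h2.symm
    · intro h
      rw [Matrix.transpose_nonsing_inv, h, Matrix.mul_nonsing_inv A hdet]
  · rw [key]
    constructor
    · intro h
      have h1 : A * (A⁻¹)ᵀ = ε • 1 := by
        have := congrArg (fun M => ε • M) h
        simpa [smul_smul, hε2] using this
      have h2 : A * ((A⁻¹)ᵀ * Aᵀ) = (ε • 1) * Aᵀ := by rw [← Matrix.mul_assoc, h1]
      rw [← Matrix.transpose_mul, Matrix.mul_nonsing_inv A hdet] at h2
      simp only [Matrix.transpose_one, Matrix.mul_one, Matrix.smul_mul, Matrix.one_mul] at h2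
      have := congrArg (fun M => ε • M) h2
      simpa [smul_smul, hε2] using this.symm
    · intro h
      have hA' : A = ε • Aᵀ := by
        have := congrArg (fun M => ε • M) h
        simpa [smul_smul, hε2] using this.symm
      rw [Matrix.transpose_nonsing_inv]
      calc ε • (A * (Aᵀ)⁻¹) = ε • ((ε • Aᵀ) * (Aᵀ)⁻¹) := by rw [← hA']
        _ = (ε * ε) • (Aᵀ * (Aᵀ)⁻¹) := by rw [Matrix.smul_mul, smul_smul]
        _ = 1 := by rw [hε2, Matrix.mul_nonsing_inv Aᵀ hdetT, one_smul]
end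

section
/- Let k be a field, H a group, σ: H → H a group automorphism with σ∘σ = id, ρ: H → GL_n(k) a group homomorphism, and χ: H → kˣ a group homomorphism with χ∘σ = χ. Assume Schur's property: every n×n matrix B over k satisfying B·ρ(h) = ρ(h)·B for all h ∈ H is a scalar multiple of the identity. If A ∈ GL_n(k) satisfies ρ(σ(h)) = χ(h)·A·(ρ(h)ᵀ)⁻¹·A⁻¹ for all h ∈ H, then there exists λ ∈ k with λ² = 1 and Aᵀ = λ·A. -/
open Matrix

/-- well-definedness of the Bellaïche–Chenevier sign: if `ρ` satisfies
Schur's property and `A ∈ GL_n(k)` satisfies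
`ρ(σ(h)) = χ(h)·A·(ρ(h)ᵀ)⁻¹·A⁻¹` for all `h`, then `Aᵀ = λ·A` with `λ² = 1`. -/
theorem stmt_7 (k : Type*) [Field k] (n : ℕ) (H : Type*) [Group H]
    (σ : H →* H) (hσ : ∀ h, σ (σ h) = h)
    (ρ : H →* GL (Fin n) k)
    (χ : H →* kˣ) (hχ : ∀ h, χ (σ h) = χ h)
    (schur : ∀ B : Matrix (Fin n) (Fin n) k,
      (∀ h, B * (ρ h : Matrix (Fin n) (Fin n) k) = (ρ h : Matrix (Fin n) (Fin n) k) * B) →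
      ∃ a : k, B = a • (1 : Matrix (Fin n) (Fin n) k))
    (A : Matrix (Fin n) (Fin n) k) (hA : IsUnit A)
    (hpol : ∀ h, (ρ (σ h) : Matrix (Fin n) (Fin n) k) =
      (χ h : k) • (A * ((ρ h : Matrix (Fin n) (Fin n) k)ᵀ)⁻¹ * A⁻¹)) :
    ∃ lam : k, lam ^ 2 = 1 ∧ Aᵀ = lam • A := by
  rcases Nat.eq_zero_or_pos n with hn | hn
  · subst hn
    exact ⟨1, by ring, Subsingleton.elim _ _⟩
  haveI : Nonempty (Fin n) := ⟨⟨0, hn⟩⟩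
  have hdA : IsUnit A.det := (Matrix.isUnit_iff_isUnit_det A).mp hA
  have hRu : ∀ h, IsUnit ((ρ h : Matrix (Fin n) (Fin n) k)).det := fun h =>
    (Matrix.isUnit_iff_isUnit_det _).mp (ρ h).isUnit
  have hRtu : ∀ h, IsUnit ((ρ h : Matrix (Fin n) (Fin n) k))ᵀ.det := fun h => by
    rw [Matrix.det_transpose]; exact hRu h
  have key : ∀ h, (ρ (σ h) : Matrix (Fin n) (Fin n) k) * A *
      ((ρ h : Matrix (Fin n) (Fin n) k))ᵀ = (χ h : k) • A := by
    intro h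
    rw [hpol h, smul_mul_assoc, smul_mul_assoc,
      Matrix.nonsing_inv_mul_cancel_right _ _ hdA,
      Matrix.nonsing_inv_mul_cancel_right _ _ (hRtu h)]
  -- transpose of key
  have key2 : ∀ h, (ρ h : Matrix (Fin n) (Fin n) k) * Aᵀ *
      ((ρ (σ h) : Matrix (Fin n) (Fin n) k))ᵀ = (χ h : k) • Aᵀ := by
    intro h
    have := congrArg Matrix.transpose (key h)
    simpa [Matrix.transpose_mul, Matrix.transpose_smul, Matrix.mul_assoc] using this
  have key3 : ∀ h, (ρ h : Matrix (Fin n) (Fin n) k) * A *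
      ((ρ (σ h) : Matrix (Fin n) (Fin n) k))ᵀ = (χ h : k) • A := by
    intro h
    have := key (σ h)
    rwa [hσ, hχ] at this
  have comm : ∀ h, (Aᵀ * A⁻¹) * (ρ h : Matrix (Fin n) (Fin n) k) =
      (ρ h : Matrix (Fin n) (Fin n) k) * (Aᵀ * A⁻¹) := by
    intro h
    set R : Matrix (Fin n) (Fin n) k := (ρ h : Matrix (Fin n) (Fin n) k) with hR
    set C : Matrix (Fin n) (Fin n) k := ((ρ (σ h) : Matrix (Fin n) (Fin n) k))ᵀ with hC
    have hCu : IsUnit C.det := by rw [hC, Matrix.det_transpose]; exact hRu (σ h)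
    have hinv : A⁻¹ * A = 1 := Matrix.nonsing_inv_mul _ hdA
    have e1 : R * A * C = (χ h : k) • A := key3 h
    have e2 : R * Aᵀ * C = (χ h : k) • Aᵀ := key2 h
    have L : (Aᵀ * A⁻¹) * R * (A * C) = (χ h : k) • Aᵀ := by
      rw [Matrix.mul_assoc (Aᵀ * A⁻¹), ← Matrix.mul_assoc R, e1, mul_smul_comm,
        Matrix.nonsing_inv_mul_cancel_right _ _ hdA]
    have Rr : R * (Aᵀ * A⁻¹) * (A * C) = (χ h : k) • Aᵀ := by
      rw [Matrix.mul_assoc R, Matrix.mul_assoc Aᵀ A⁻¹, ← Matrix.mul_assoc A⁻¹ A C,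
        hinv, Matrix.one_mul, ← Matrix.mul_assoc R Aᵀ C, e2]
    have hsq : ((Aᵀ * A⁻¹) * R) * (A * C) = (R * (Aᵀ * A⁻¹)) * (A * C) := L.trans Rr.symm
    have hACu : IsUnit (A * C) := by
      rw [Matrix.isUnit_iff_isUnit_det, Matrix.det_mul]
      exact hdA.mul hCu
    exact hACu.mul_right_cancel hsq
  obtain ⟨a, ha⟩ := schur (Aᵀ * A⁻¹) comm
  have hAt : Aᵀ = a • A := by
    have := congrArg (· * A) ha
    simpa [Matrix.nonsing_inv_mul_cancel_right _ _ hdA, smul_mul_assoc] using this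
  refine ⟨a, ?_, hAt⟩
  have hAA : A = a • Aᵀ := by
    have := congrArg Matrix.transpose hAt
    simpa using this
  have h2 : A = (a ^ 2) • A := by
    rw [hAt, smul_smul, ← sq] at hAA
    exact hAA
  have hA0 : A ≠ 0 := hA.ne_zero
  have : (a ^ 2 - 1) • A = 0 := by
    rw [sub_smul, one_smul, ← h2, sub_self]
  rcases smul_eq_zero.mp this with h | h
  · exact sub_eq_zero.mp h
  · exact absurd h hA0
end

section
/- Let k be a field, H a group, σ: H → H a group automorphism with σ∘σ = id, and χ: H → kˣ a group homomorphism. Let r: H → GL_n(k) be a group homomorphism and B ∈ GL_n(k) with Bᵀ = −B such that r(σ(h)) = χ(h)·B·(r(h)ᵀ)⁻¹·B⁻¹ for all h ∈ H. Define ρ: H → GL_{2n}(k) by ρ(h) = block-diagonal(r(h), r(h)). Then both A₁ = block-diagonal(B, B) and A₂ = [[0, −B],[B, 0]] are invertible and satisfy ρ(σ(h)) = χ(h)·A_i·(ρ(h)ᵀ)⁻¹·A_i⁻¹ for all h ∈ H, while A₁ᵀ = −A₁ and A₂ᵀ = A₂. -/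
open Matrix

/-- two polarisations of opposite signs on `r ⊕ r`: if `B` is
antisymmetric and polarises `r`, then both `A₁ = blockdiag(B, B)` and
`A₂ = [[0, −B],[B, 0]]` polarise `ρ = blockdiag(r, r)`, with `A₁ᵀ = −A₁` and
`A₂ᵀ = A₂`. -/
theorem stmt_12 (k : Type*) [Field k] (n : ℕ) (H : Type*) [Group H]
    (σ : H →* H) (hσ : ∀ h, σ (σ h) = h)
    (χ : H →* kˣ)
    (r : H →* GL (Fin n) k)
    (B : Matrix (Fin n) (Fin n) k) (hB : IsUnit B) (hBt : Bᵀ = -B)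
    (hpol : ∀ h, (r (σ h) : Matrix (Fin n) (Fin n) k) =
      (χ h : k) • (B * ((r h : Matrix (Fin n) (Fin n) k)ᵀ)⁻¹ * B⁻¹))
    (ρ : H → Matrix (Fin n ⊕ Fin n) (Fin n ⊕ Fin n) k)
    (hρ : ∀ h, ρ h = Matrix.fromBlocks (r h : Matrix (Fin n) (Fin n) k) 0 0
      (r h : Matrix (Fin n) (Fin n) k))
    (A₁ A₂ : Matrix (Fin n ⊕ Fin n) (Fin n ⊕ Fin n) k)
    (hA₁ : A₁ = Matrix.fromBlocks B 0 0 B)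
    (hA₂ : A₂ = Matrix.fromBlocks 0 (-B) B 0) :
    IsUnit A₁ ∧ IsUnit A₂ ∧
    (∀ h, ρ (σ h) = (χ h : k) • (A₁ * ((ρ h)ᵀ)⁻¹ * A₁⁻¹)) ∧
    (∀ h, ρ (σ h) = (χ h : k) • (A₂ * ((ρ h)ᵀ)⁻¹ * A₂⁻¹)) ∧
    A₁ᵀ = -A₁ ∧ A₂ᵀ = A₂ := by
  have hBB : B * B⁻¹ = 1 := mul_nonsing_inv B ((isUnit_iff_isUnit_det B).mp hB)
  -- inverses of A₁, A₂
  have hA₁mul : A₁ * Matrix.fromBlocks B⁻¹ 0 0 B⁻¹ = 1 := by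
    rw [hA₁, Matrix.fromBlocks_multiply]
    simp [hBB, Matrix.fromBlocks_one]
  have hA₂mul : A₂ * Matrix.fromBlocks 0 B⁻¹ (-B⁻¹) 0 = 1 := by
    rw [hA₂, Matrix.fromBlocks_multiply]
    simp [hBB, Matrix.fromBlocks_one]
  have hA₁inv : A₁⁻¹ = Matrix.fromBlocks B⁻¹ 0 0 B⁻¹ := inv_eq_right_inv hA₁mul
  have hA₂inv : A₂⁻¹ = Matrix.fromBlocks 0 B⁻¹ (-B⁻¹) 0 := inv_eq_right_inv hA₂mul
  have hU₁ : IsUnit A₁ := @isUnit_of_invertible _ _ _ (invertibleOfRightInverse _ _ hA₁mul)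
  have hU₂ : IsUnit A₂ := @isUnit_of_invertible _ _ _ (invertibleOfRightInverse _ _ hA₂mul)
  -- inverse of (ρ h)ᵀ
  have hρtinv : ∀ h, ((ρ h)ᵀ)⁻¹ =
      Matrix.fromBlocks ((r h : Matrix (Fin n) (Fin n) k)ᵀ)⁻¹ 0 0
        ((r h : Matrix (Fin n) (Fin n) k)ᵀ)⁻¹ := by
    intro h
    have hu : IsUnit ((r h : Matrix (Fin n) (Fin n) k)ᵀ) := by
      have : IsUnit (r h : Matrix (Fin n) (Fin n) k) := (r h).isUnit
      rw [Matrix.isUnit_iff_isUnit_det, Matrix.det_transpose,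
        ← Matrix.isUnit_iff_isUnit_det]
      exact this
    have hmul : ((r h : Matrix (Fin n) (Fin n) k)ᵀ) *
        ((r h : Matrix (Fin n) (Fin n) k)ᵀ)⁻¹ = 1 :=
      mul_nonsing_inv _ ((isUnit_iff_isUnit_det _).mp hu)
    apply inv_eq_right_inv
    rw [hρ, Matrix.fromBlocks_transpose, Matrix.fromBlocks_multiply]
    simp [hmul, Matrix.fromBlocks_one]
  refine ⟨hU₁, hU₂, ?_, ?_, ?_, ?_⟩
  · intro h
    rw [hρtinv, hA₁inv, hA₁, hρ,
      Matrix.fromBlocks_multiply, Matrix.fromBlocks_multiply, hpol h]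
    simp [Matrix.fromBlocks_smul]
  · intro h
    rw [hρtinv, hA₂inv, hA₂, hρ,
      Matrix.fromBlocks_multiply, Matrix.fromBlocks_multiply, hpol h]
    simp [Matrix.fromBlocks_smul, Matrix.neg_mul, Matrix.mul_neg]
  · rw [hA₁, Matrix.fromBlocks_transpose, hBt]
    simp [Matrix.fromBlocks_neg]
  · rw [hA₂, Matrix.fromBlocks_transpose, Matrix.transpose_neg, hBt]
    simp
end

section
/- Let k be a field, H a group, σ: H → H a group automorphism with σ∘σ = id, and χ: H → kˣ a group homomorphism. Let r: H → GL_m(k) and s: H → GL_p(k) be group homomorphisms and set ρ(h) = block-diagonal(r(h), s(h)) ∈ GL_{m+p}(k). Suppose A ∈ GL_{m+p}(k) and λ ∈ k satisfy Aᵀ = λ·A and ρ(σ(h)) = χ(h)·A·(ρ(h)ᵀ)⁻¹·A⁻¹ for all h ∈ H. Suppose further that the only m×p matrix M over k with r(σ(h))·M = χ(h)·M·(s(h)ᵀ)⁻¹ for all h ∈ H is M = 0, and the only p×m matrix N over k with s(σ(h))·N = χ(h)·N·(r(h)ᵀ)⁻¹ for all h ∈ H is N = 0. Then the upper-left m×m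 block A_r of A is invertible, r(σ(h)) = χ(h)·A_r·(r(h)ᵀ)⁻¹·A_r⁻¹ for all h ∈ H, and A_rᵀ = λ·A_r. -/
open Matrix

/-- a polarisation determines the sign of a multiplicity-one constituent:
if `A` polarises `ρ = blockdiag(r, s)` with sign `λ`, and there are no nonzero
intertwiners between the two blocks, then the upper-left block `A_r` of `A` is
invertible, polarises `r`, and satisfies `A_rᵀ = λ·A_r`. -/
theorem stmt_13 (k : Type*) [Field k] (m p : ℕ) (H : Type*) [Group H]
    (σ : H →* H) (hσ : ∀ h, σ (σ h) = h)
    (χ : H →* kˣ)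
    (r : H →* GL (Fin m) k) (s : H →* GL (Fin p) k)
    (ρ : H → Matrix (Fin m ⊕ Fin p) (Fin m ⊕ Fin p) k)
    (hρ : ∀ h, ρ h = Matrix.fromBlocks (r h : Matrix (Fin m) (Fin m) k) 0 0
      (s h : Matrix (Fin p) (Fin p) k))
    (A : Matrix (Fin m ⊕ Fin p) (Fin m ⊕ Fin p) k) (hA : IsUnit A)
    (lam : k) (hAt : Aᵀ = lam • A)
    (hpol : ∀ h, ρ (σ h) = (χ h : k) • (A * ((ρ h)ᵀ)⁻¹ * A⁻¹))
    (hM : ∀ M : Matrix (Fin m) (Fin p) k,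
      (∀ h, (r (σ h) : Matrix (Fin m) (Fin m) k) * M =
        (χ h : k) • (M * ((s h : Matrix (Fin p) (Fin p) k)ᵀ)⁻¹)) → M = 0)
    (hN : ∀ N : Matrix (Fin p) (Fin m) k,
      (∀ h, (s (σ h) : Matrix (Fin p) (Fin p) k) * N =
        (χ h : k) • (N * ((r h : Matrix (Fin m) (Fin m) k)ᵀ)⁻¹)) → N = 0) :
    IsUnit A.toBlocks₁₁ ∧
    (∀ h, (r (σ h) : Matrix (Fin m) (Fin m) k) =
      (χ h : k) • (A.toBlocks₁₁ * ((r h : Matrix (Fin m) (Fin m) k)ᵀ)⁻¹ *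
        (A.toBlocks₁₁)⁻¹)) ∧
    (A.toBlocks₁₁)ᵀ = lam • A.toBlocks₁₁ := by
  have hrU : ∀ h, IsUnit ((r h : Matrix (Fin m) (Fin m) k)ᵀ).det := by
    intro h
    rw [det_transpose]
    exact (r h).isUnit.map (detMonoidHom)
  have hsU : ∀ h, IsUnit ((s h : Matrix (Fin p) (Fin p) k)ᵀ).det := by
    intro h
    rw [det_transpose]
    exact (s h).isUnit.map (detMonoidHom)
  have hinv : ∀ h, ((ρ h)ᵀ)⁻¹ =
      fromBlocks ((r h : Matrix (Fin m) (Fin m) k)ᵀ)⁻¹ 0 0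
        ((s h : Matrix (Fin p) (Fin p) k)ᵀ)⁻¹ := by
    intro h
    apply inv_eq_right_inv
    rw [hρ, fromBlocks_transpose, fromBlocks_multiply]
    simp [mul_nonsing_inv _ (hrU h), mul_nonsing_inv _ (hsU h),
      ← fromBlocks_one]
  have hAd : IsUnit A.det := (isUnit_iff_isUnit_det A).mp hA
  have key : ∀ h, ρ (σ h) * A = (χ h : k) •
      (A * fromBlocks ((r h : Matrix (Fin m) (Fin m) k)ᵀ)⁻¹ 0 0
        ((s h : Matrix (Fin p) (Fin p) k)ᵀ)⁻¹) := by
    intro h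
    rw [hpol h, smul_mul_assoc, mul_assoc, mul_assoc, nonsing_inv_mul A hAd,
      mul_one, hinv h]
  -- block equations
  have keyB : ∀ h,
      fromBlocks ((r (σ h) : Matrix (Fin m) (Fin m) k) * A.toBlocks₁₁)
        ((r (σ h) : Matrix (Fin m) (Fin m) k) * A.toBlocks₁₂)
        ((s (σ h) : Matrix (Fin p) (Fin p) k) * A.toBlocks₂₁)
        ((s (σ h) : Matrix (Fin p) (Fin p) k) * A.toBlocks₂₂)
      = fromBlocks ((χ h : k) • (A.toBlocks₁₁ * ((r h : Matrix (Fin m) (Fin m) k)ᵀ)⁻¹))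
        ((χ h : k) • (A.toBlocks₁₂ * ((s h : Matrix (Fin p) (Fin p) k)ᵀ)⁻¹))
        ((χ h : k) • (A.toBlocks₂₁ * ((r h : Matrix (Fin m) (Fin m) k)ᵀ)⁻¹))
        ((χ h : k) • (A.toBlocks₂₂ * ((s h : Matrix (Fin p) (Fin p) k)ᵀ)⁻¹)) := by
    intro h
    have := key h
    rw [hρ, ← fromBlocks_toBlocks A, fromBlocks_multiply, fromBlocks_multiply,
      fromBlocks_smul] at this
    simpa using this
  have h12 : A.toBlocks₁₂ = 0 := by
    apply hM
    intro h
    have := congrArg toBlocks₁₂ (keyB h)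
    simpa [toBlocks_fromBlocks₁₂] using this
  have h21 : A.toBlocks₂₁ = 0 := by
    apply hN
    intro h
    have := congrArg toBlocks₂₁ (keyB h)
    simpa [toBlocks_fromBlocks₂₁] using this
  have hAblk : A = fromBlocks A.toBlocks₁₁ 0 0 A.toBlocks₂₂ := by
    conv_lhs => rw [← fromBlocks_toBlocks A]
    rw [h12, h21]
  have h11U : IsUnit A.toBlocks₁₁ := by
    rw [isUnit_iff_isUnit_det]
    have : A.det = A.toBlocks₁₁.det * A.toBlocks₂₂.det := by
      rw [hAblk] at hAd ⊢; exact det_fromBlocks_zero₂₁ _ _ _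
    rw [this] at hAd
    exact (isUnit_of_mul_isUnit_left hAd)
  refine ⟨h11U, ?_, ?_⟩
  · intro h
    have e11 : (r (σ h) : Matrix (Fin m) (Fin m) k) * A.toBlocks₁₁ =
        (χ h : k) • (A.toBlocks₁₁ * ((r h : Matrix (Fin m) (Fin m) k)ᵀ)⁻¹) := by
      have := congrArg toBlocks₁₁ (keyB h)
      simpa [toBlocks_fromBlocks₁₁] using this
    have h11d : IsUnit A.toBlocks₁₁.det := (isUnit_iff_isUnit_det _).mp h11U
    calc (r (σ h) : Matrix (Fin m) (Fin m) k)
        = (r (σ h) : Matrix (Fin m) (Fin m) k) * A.toBlocks₁₁ * (A.toBlocks₁₁)⁻¹ := by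
          rw [mul_assoc, mul_nonsing_inv _ h11d, mul_one]
      _ = _ := by rw [e11, smul_mul_assoc]
  · have := congrArg toBlocks₁₁ hAt
    ext i j
    simpa [toBlocks₁₁] using congrFun (congrFun this i) j
end
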